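/- arXiv:2201.07923 — 6 statements merged into one kernel-verified Lean document; each statement's English description precedes it below -/
import Mathlib

section
/- Let d, N, N_L be natural numbers with N_L ≤ N and let ε, c be real numbers with 0 ≤ ε ≤ 1/4 and 0 ≤ c. For k = 1,…,N let B_k = blockdiag(1, M_k) be (1+d)×(1+d) real block-diagonal matrices with ‖M_k‖₂ ≤ 1 for all k and ‖M_k‖₂ ≤ 1 − 4ε for at least N_L indices k, and set R = B_N ⋯ B_1. Let v, w ∈ ℝ^{1+d} with the first coordinate of w equal to zero and ‖w‖‖v‖ ≤ 1, and let r̃ be a real number with |r̃| ≥ 1 − c. Then |wᵀ R v − r̃| ≥ 1 − c − exp(−4ε N_L). -/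
open scoped BigOperators
open Matrix

/-- Euclidean norm of a real vector. -/
noncomputable def euclNorm {ι : Type*} [Fintype ι] (v : ι → ℝ) : ℝ :=
  Real.sqrt (∑ i, v i ^ 2)

/-- Spectral norm (operator 2-norm, largest singular value) of a real square matrix. -/
noncomputable def specNorm {d : ℕ} (M : Matrix (Fin d) (Fin d) ℝ) : ℝ :=
  ‖LinearMap.toContinuousLinearMap (Matrix.toEuclideanLin M)‖

lemma enorm_nonneg' {ι : Type*} [Fintype ι] (v : ι → ℝ) : 0 ≤ euclNorm v :=
  Real.sqrt_nonneg _

lemma enorm_eq {ι : Type*} [Fintype ι] (v : ι → ℝ) :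
    euclNorm v = ‖(WithLp.equiv 2 (ι → ℝ)).symm v‖ := by
  rw [EuclideanSpace.norm_eq, euclNorm]
  congr 1
  refine Finset.sum_congr rfl fun i _ => ?_
  simp [Real.norm_eq_abs, sq_abs]

lemma abs_dot_le {ι : Type*} [Fintype ι] (u x : ι → ℝ) :
    |u ⬝ᵥ x| ≤ euclNorm u * euclNorm x := by
  have h := abs_real_inner_le_norm ((WithLp.equiv 2 (ι → ℝ)).symm u)
      ((WithLp.equiv 2 (ι → ℝ)).symm x)
  rw [enorm_eq, enorm_eq]
  have e : (inner ℝ ((WithLp.equiv 2 (ι → ℝ)).symm u) ((WithLp.equiv 2 (ι → ℝ)).symm x) : ℝ)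
      = u ⬝ᵥ x := by
    simp [PiLp.inner_apply, RCLike.inner_apply, dotProduct, mul_comm]
  rw [e] at h
  exact h

lemma toCLM_apply {d : ℕ} (P : Matrix (Fin d) (Fin d) ℝ) (x : Fin d → ℝ) :
    (LinearMap.toContinuousLinearMap (Matrix.toEuclideanLin P))
      ((WithLp.equiv 2 (Fin d → ℝ)).symm x) = (WithLp.equiv 2 (Fin d → ℝ)).symm (P *ᵥ x) := by
  rw [LinearMap.coe_toContinuousLinearMap']
  exact Matrix.toEuclideanLin_apply_piLp_toLp P x

lemma enorm_mulVec_le {d : ℕ} (P : Matrix (Fin d) (Fin d) ℝ) (x : Fin d → ℝ) :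
    euclNorm (P *ᵥ x) ≤ specNorm P * euclNorm x := by
  rw [enorm_eq, enorm_eq]
  have h := (LinearMap.toContinuousLinearMap (Matrix.toEuclideanLin P)).le_opNorm
    ((WithLp.equiv 2 (Fin d → ℝ)).symm x)
  rw [toCLM_apply] at h
  exact h

lemma specNorm_nonneg {d : ℕ} (M : Matrix (Fin d) (Fin d) ℝ) : 0 ≤ specNorm M :=
  norm_nonneg _

lemma specNorm_one_le {d : ℕ} : specNorm (1 : Matrix (Fin d) (Fin d) ℝ) ≤ 1 := by
  rw [specNorm]
  refine ContinuousLinearMap.opNorm_le_bound _ zero_le_one fun x => ?_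
  rw [one_mul]
  apply le_of_eq
  congr 1
  have : x = (WithLp.equiv 2 (Fin d → ℝ)).symm ((WithLp.equiv 2 (Fin d → ℝ)) x) := rfl
  rw [this, toCLM_apply]
  simp

lemma specNorm_mul_le {d : ℕ} (A B : Matrix (Fin d) (Fin d) ℝ) :
    specNorm (A * B) ≤ specNorm A * specNorm B := by
  simp only [specNorm]
  have h := (LinearMap.toContinuousLinearMap (Matrix.toEuclideanLin A)).opNorm_comp_le
    (LinearMap.toContinuousLinearMap (Matrix.toEuclideanLin B))
  refine le_trans (le_of_eq ?_) h
  congr 1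
  ext1 x
  show (LinearMap.toContinuousLinearMap (Matrix.toEuclideanLin (A * B))) x
      = (LinearMap.toContinuousLinearMap (Matrix.toEuclideanLin A))
        ((LinearMap.toContinuousLinearMap (Matrix.toEuclideanLin B)) x)
  have : x = (WithLp.equiv 2 (Fin d → ℝ)).symm ((WithLp.equiv 2 (Fin d → ℝ)) x) := rfl
  rw [this, toCLM_apply, toCLM_apply, toCLM_apply, Matrix.mulVec_mulVec]

lemma specNorm_list_prod_le {d : ℕ} (L : List (Matrix (Fin d) (Fin d) ℝ)) :
    specNorm L.prod ≤ (L.map specNorm).prod := by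
  induction L with
  | nil => simpa using specNorm_one_le (d := d)
  | cons a t ih =>
      simp only [List.prod_cons, List.map_cons]
      refine le_trans (specNorm_mul_le a t.prod) ?_
      exact mul_le_mul_of_nonneg_left ih (specNorm_nonneg a)

lemma blockProd {d : ℕ} (L : List (Matrix (Fin d) (Fin d) ℝ)) :
    (L.map (fun M => fromBlocks (1 : Matrix (Fin 1) (Fin 1) ℝ) 0 0 M)).prod
      = fromBlocks 1 0 0 L.prod := by
  induction L with
  | nil => simp [Matrix.fromBlocks_one]
  | cons a t ih =>
      simp only [List.map_cons, List.prod_cons, ih, Matrix.fromBlocks_multiply]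
      simp

/-- lower bound on the computational error: if the error-free result `r̃`
has magnitude at least `1 - c`, the noisy result `wᵀ R v` deviates from it by at least
`1 - c - exp(-4ε N_L)`. -/
theorem stmt1 (d N NL : ℕ) (hNL : NL ≤ N) (ε c : ℝ) (hε0 : 0 ≤ ε) (hε1 : ε ≤ 1 / 4)
    (hc : 0 ≤ c)
    (M : Fin N → Matrix (Fin d) (Fin d) ℝ)
    (hM1 : ∀ k, specNorm (M k) ≤ 1)
    (hMε : ∃ s : Finset (Fin N), NL ≤ s.card ∧ ∀ k ∈ s, specNorm (M k) ≤ 1 - 4 * ε)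
    (B : Fin N → Matrix (Fin 1 ⊕ Fin d) (Fin 1 ⊕ Fin d) ℝ)
    (hB : ∀ k, B k = fromBlocks (1 : Matrix (Fin 1) (Fin 1) ℝ) 0 0 (M k))
    (R : Matrix (Fin 1 ⊕ Fin d) (Fin 1 ⊕ Fin d) ℝ)
    (hR : R = ((List.ofFn B).reverse).prod)
    (v w : Fin 1 ⊕ Fin d → ℝ) (hw : w (Sum.inl 0) = 0)
    (hwv : euclNorm w * euclNorm v ≤ 1)
    (rt : ℝ) (hrt : 1 - c ≤ |rt|) :
    1 - c - Real.exp (-(4 * ε * NL)) ≤ |w ⬝ᵥ R.mulVec v - rt| := by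
  obtain ⟨s, hcard, hs⟩ := hMε
  set P : Matrix (Fin d) (Fin d) ℝ := ((List.ofFn M).reverse).prod with hP
  have hε4 : 0 ≤ 1 - 4 * ε := by linarith
  -- R is block diagonal
  have hRP : R = fromBlocks 1 0 0 P := by
    rw [hR, hP]
    have hBM : List.ofFn B
        = (List.ofFn M).map (fun A => fromBlocks (1 : Matrix (Fin 1) (Fin 1) ℝ) 0 0 A) := by
      rw [List.map_ofFn]
      exact congrArg List.ofFn (funext hB)
    rw [hBM, ← List.map_reverse, blockProd]
  -- the dot product only sees the lower-right block
  have hdot : w ⬝ᵥ R.mulVec v = (w ∘ Sum.inr) ⬝ᵥ (P *ᵥ (v ∘ Sum.inr)) := by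
    rw [hRP]
    simp [dotProduct, Fintype.sum_sum_type, Matrix.fromBlocks_mulVec, hw]
  -- spectral norm bound on P
  have hPle : specNorm P ≤ (1 - 4 * ε) ^ NL := by
    have h1 : specNorm P ≤ ∏ k, specNorm (M k) := by
      refine le_trans (specNorm_list_prod_le _) (le_of_eq ?_)
      rw [List.map_reverse, List.prod_reverse, List.map_ofFn, List.prod_ofFn]
      rfl
    have h2 : ∏ k, specNorm (M k)
        = (∏ k ∈ s, specNorm (M k)) * ∏ k ∈ sᶜ, specNorm (M k) :=
      (Finset.prod_mul_prod_compl s _).symm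
    have h3 : ∏ k ∈ s, specNorm (M k) ≤ (1 - 4 * ε) ^ s.card := by
      rw [← Finset.prod_const]
      exact Finset.prod_le_prod (fun k _ => specNorm_nonneg _) (fun k hk => hs k hk)
    have h4 : ∏ k ∈ sᶜ, specNorm (M k) ≤ 1 :=
      Finset.prod_le_one (fun k _ => specNorm_nonneg _) (fun k _ => hM1 k)
    have h5 : (0:ℝ) ≤ ∏ k ∈ sᶜ, specNorm (M k) :=
      Finset.prod_nonneg fun k _ => specNorm_nonneg _
    have h6 : (1 - 4 * ε) ^ s.card ≤ (1 - 4 * ε) ^ NL :=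
      pow_le_pow_of_le_one hε4 (by linarith) hcard
    calc specNorm P ≤ ∏ k, specNorm (M k) := h1
      _ = (∏ k ∈ s, specNorm (M k)) * ∏ k ∈ sᶜ, specNorm (M k) := h2
      _ ≤ (1 - 4 * ε) ^ s.card * 1 := by
          refine mul_le_mul h3 h4 h5 (pow_nonneg hε4 _)
      _ = (1 - 4 * ε) ^ s.card := mul_one _
      _ ≤ (1 - 4 * ε) ^ NL := h6
  have hexp : (1 - 4 * ε) ^ NL ≤ Real.exp (-(4 * ε * NL)) := by
    have h1 : 1 - 4 * ε ≤ Real.exp (-(4 * ε)) := by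
      have := Real.add_one_le_exp (-(4 * ε)); linarith
    have h2 : (1 - 4 * ε) ^ NL ≤ (Real.exp (-(4 * ε))) ^ NL :=
      pow_le_pow_left₀ hε4 h1 NL
    have h3 : (Real.exp (-(4 * ε))) ^ NL = Real.exp (-(4 * ε * NL)) := by
      rw [← Real.exp_nat_mul]
      ring_nf
    linarith [h2, h3.le, h3.ge]
  -- norms of the truncated vectors
  have hwE : euclNorm (w ∘ Sum.inr) = euclNorm w := by
    simp [euclNorm, Fintype.sum_sum_type, hw, Function.comp]
  have hvE : euclNorm (v ∘ Sum.inr) ≤ euclNorm v := by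
    apply Real.sqrt_le_sqrt
    have : (0:ℝ) ≤ ∑ i : Fin 1, v (Sum.inl i) ^ 2 :=
      Finset.sum_nonneg fun i _ => sq_nonneg _
    calc ∑ j, (v ∘ Sum.inr) j ^ 2 = ∑ j, v (Sum.inr j) ^ 2 := rfl
      _ ≤ (∑ i : Fin 1, v (Sum.inl i) ^ 2) + ∑ j, v (Sum.inr j) ^ 2 := by linarith
      _ = ∑ i, v i ^ 2 := (Fintype.sum_sum_type (fun i => v i ^ 2)).symm
  -- the key bound on the computed value
  have hmain : |w ⬝ᵥ R.mulVec v| ≤ Real.exp (-(4 * ε * NL)) := by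
    rw [hdot]
    calc |(w ∘ Sum.inr) ⬝ᵥ (P *ᵥ (v ∘ Sum.inr))|
        ≤ euclNorm (w ∘ Sum.inr) * euclNorm (P *ᵥ (v ∘ Sum.inr)) := abs_dot_le _ _
      _ ≤ euclNorm (w ∘ Sum.inr) * (specNorm P * euclNorm (v ∘ Sum.inr)) :=
          mul_le_mul_of_nonneg_left (enorm_mulVec_le _ _) (enorm_nonneg' _)
      _ = specNorm P * (euclNorm (w ∘ Sum.inr) * euclNorm (v ∘ Sum.inr)) := by ring
      _ ≤ specNorm P * (euclNorm w * euclNorm v) := by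
          refine mul_le_mul_of_nonneg_left ?_ (specNorm_nonneg _)
          rw [hwE]
          exact mul_le_mul_of_nonneg_left hvE (enorm_nonneg' _)
      _ ≤ specNorm P * 1 := mul_le_mul_of_nonneg_left hwv (specNorm_nonneg _)
      _ = specNorm P := mul_one _
      _ ≤ (1 - 4 * ε) ^ NL := hPle
      _ ≤ Real.exp (-(4 * ε * NL)) := hexp
  have hfin : |rt| - |w ⬝ᵥ R.mulVec v| ≤ |w ⬝ᵥ R.mulVec v - rt| := by
    rw [abs_sub_comm]
    exact abs_sub_abs_le_abs_sub rt _
  linarith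
end

section
/- Let d, N be natural numbers, ε ∈ [0, 1] a real number, and M a d×d Hermitian complex matrix all of whose eigenvalues lie in [−1, 1]. Let ρ₀ be a d×d density matrix, let G₁,…,G_N be d×d unitary matrices, and for each k = 1,…,N let I_k be a finite index set, p_k : I_k → ℝ a probability vector with distinguished index 1 ∈ I_k satisfying p_k(1) ≥ 1 − ε, and S_{k,i} (i ∈ I_k) unitary matrices with S_{k,1} = I. Define recursively ρ_k = Σ_{i ∈ I_k} p_k(i) · S_{k,i} G_k ρ_{k−1} G_k† S_{k,i}†, and ρ̃_k = G_k ρ̃_{k−1} G_k† with ρ̃₀ = ρ₀. Then |Tr(M ρ_N) − Tr(M ρ̃_N)| ≤ 2(1 − (1 − ε)^N) ≤ 2 ε N. -/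
open scoped BigOperators
open Matrix
open scoped ComplexOrder

lemma psd_trace_nonneg {d : ℕ} {A : Matrix (Fin d) (Fin d) ℂ} (hA : A.PosSemidef) :
    0 ≤ A.trace := by
  rw [Matrix.trace]
  refine Finset.sum_nonneg fun i _ => ?_
  have := hA.dotProduct_mulVec_nonneg (Pi.single i 1)
  simpa [dotProduct, Matrix.mulVec, Pi.single_apply, Matrix.diag] using this

lemma psd_smul {d : ℕ} {A : Matrix (Fin d) (Fin d) ℂ} (hA : A.PosSemidef) {c : ℝ}
    (hc : 0 ≤ c) : ((c : ℂ) • A).PosSemidef := by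
  refine posSemidef_iff_dotProduct_mulVec.mpr ⟨?_, fun x => ?_⟩
  · rw [Matrix.IsHermitian, Matrix.conjTranspose_smul, hA.1.eq]
    simp
  · rw [Matrix.smul_mulVec, dotProduct_smul]
    exact smul_nonneg (by exact_mod_cast hc) (hA.dotProduct_mulVec_nonneg x)

lemma psd_sum {d : ℕ} {ι : Type} [Fintype ι] (s : Finset ι) (f : ι → Matrix (Fin d) (Fin d) ℂ)
    (h : ∀ i ∈ s, (f i).PosSemidef) : (∑ i ∈ s, f i).PosSemidef :=
  Finset.sum_induction f _ (fun _ _ ha hb => ha.add hb) .zero h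

lemma one_sub_psd {d : ℕ} {M : Matrix (Fin d) (Fin d) ℂ} (hM : M.IsHermitian)
    (h : ∀ i, hM.eigenvalues i ≤ 1) : (1 - M).PosSemidef := by
  set U := (hM.eigenvectorUnitary : Matrix (Fin d) (Fin d) ℂ)
  have hU : U * star U = 1 := Matrix.mem_unitaryGroup_iff.mp hM.eigenvectorUnitary.2
  have hdec : 1 - M =
      U * Matrix.diagonal (fun i => 1 - (hM.eigenvalues i : ℂ)) * star U := by
    have hs := hM.spectral_theorem
    have : Matrix.diagonal (fun i => 1 - (hM.eigenvalues i : ℂ)) =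
        1 - Matrix.diagonal (RCLike.ofReal ∘ hM.eigenvalues) := by
      rw [← Matrix.diagonal_one, ← Matrix.diagonal_sub]
      rfl
    rw [this, Matrix.mul_sub, Matrix.sub_mul, Matrix.mul_one, hU]; exact congrArg _ hs
  rw [hdec, Matrix.star_eq_conjTranspose]
  refine (Matrix.PosSemidef.diagonal (fun i => ?_)).mul_mul_conjTranspose_same U
  show (0 : ℂ) ≤ 1 - (hM.eigenvalues i : ℂ)
  rw [← Complex.ofReal_one, ← Complex.ofReal_sub]
  exact_mod_cast sub_nonneg.mpr (h i)

lemma one_add_psd {d : ℕ} {M : Matrix (Fin d) (Fin d) ℂ} (hM : M.IsHermitian)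
    (h : ∀ i, -1 ≤ hM.eigenvalues i) : (1 + M).PosSemidef := by
  set U := (hM.eigenvectorUnitary : Matrix (Fin d) (Fin d) ℂ)
  have hU : U * star U = 1 := Matrix.mem_unitaryGroup_iff.mp hM.eigenvectorUnitary.2
  have hdec : 1 + M =
      U * Matrix.diagonal (fun i => 1 + (hM.eigenvalues i : ℂ)) * star U := by
    have hs := hM.spectral_theorem
    have : Matrix.diagonal (fun i => 1 + (hM.eigenvalues i : ℂ)) =
        1 + Matrix.diagonal (RCLike.ofReal ∘ hM.eigenvalues) := by
      rw [← Matrix.diagonal_one, ← Matrix.diagonal_add]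
      rfl
    rw [this, Matrix.mul_add, Matrix.add_mul, Matrix.mul_one, hU]; exact congrArg _ hs
  rw [hdec, Matrix.star_eq_conjTranspose]
  refine (Matrix.PosSemidef.diagonal (fun i => ?_)).mul_mul_conjTranspose_same U
  show (0 : ℂ) ≤ 1 + (hM.eigenvalues i : ℂ)
  rw [← Complex.ofReal_one, ← Complex.ofReal_add]
  have := h i
  exact_mod_cast by linarith

open scoped MatrixOrder in
lemma abs_trace_mul_le {d : ℕ} {M A : Matrix (Fin d) (Fin d) ℂ}
    (h1 : (1 - M).PosSemidef) (h2 : (1 + M).PosSemidef) (hA : A.PosSemidef) :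
    ‖(M * A).trace‖ ≤ A.trace.re := by
  set s := CFC.sqrt A with hs_def
  have hs : s.PosSemidef := (CFC.sqrt_nonneg A).posSemidef
  have hss : s * s = A := CFC.sqrt_mul_sqrt_self A hA.nonneg
  have hsH : sᴴ = s := hs.1.eq
  have key : ∀ B : Matrix (Fin d) (Fin d) ℂ, B.PosSemidef → 0 ≤ (s * B * s).trace := by
    intro B hB
    have := hB.conjTranspose_mul_mul_same s
    rw [hsH] at this
    exact psd_trace_nonneg this
  have e1 : s * (1 - M) * s = A - s * M * s := by
    rw [Matrix.mul_sub, Matrix.sub_mul, Matrix.mul_one, hss]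
  have e2 : s * (1 + M) * s = A + s * M * s := by
    rw [Matrix.mul_add, Matrix.add_mul, Matrix.mul_one, hss]
  have etr : (s * M * s).trace = (M * A).trace := by
    rw [Matrix.trace_mul_comm (s * M) s, ← Matrix.mul_assoc, hss, Matrix.trace_mul_comm]
  have t1 := key _ h1
  have t2 := key _ h2
  rw [e1, Matrix.trace_sub, etr] at t1
  rw [e2, Matrix.trace_add, etr] at t2
  rw [Complex.nonneg_iff] at t1 t2
  have hAim : A.trace.im = 0 := by
    have := psd_trace_nonneg hA
    rw [Complex.nonneg_iff] at this
    exact this.2.symm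
  obtain ⟨t1re, t1im⟩ := t1
  obtain ⟨t2re, t2im⟩ := t2
  set z := (M * A).trace
  have hzim : z.im = 0 := by
    have : (A.trace - z).im = A.trace.im - z.im := by simp
    rw [this] at t1im; rw [hAim] at t1im; linarith [t1im]
  have hz : z = (z.re : ℂ) := Complex.ext rfl (by simp [hzim])
  rw [hz, Complex.norm_real, Real.norm_eq_abs]
  have h1' : z.re ≤ A.trace.re := by
    have : (A.trace - z).re = A.trace.re - z.re := by simp
    rw [this] at t1re; linarith
  have h2' : -A.trace.re ≤ z.re := by
    have : (A.trace + z).re = A.trace.re + z.re := by simp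
    rw [this] at t2re; linarith
  exact abs_le.mpr ⟨h2', h1'⟩

lemma conj_trace_eq {d : ℕ} {U : Matrix (Fin d) (Fin d) ℂ}
    (hU : U ∈ Matrix.unitaryGroup (Fin d) ℂ) (A : Matrix (Fin d) (Fin d) ℂ) :
    (U * A * Uᴴ).trace = A.trace := by
  rw [Matrix.trace_mul_comm, ← Matrix.mul_assoc, ← Matrix.star_eq_conjTranspose,
    Matrix.mem_unitaryGroup_iff'.mp hU, Matrix.one_mul]

/-- Proposition 2: without QEM, the computational error of a circuit of `N`
imperfect gates, each a probabilistic mixture of unitary errors with identity probability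
at least `1 - ε`, satisfies `|Tr(M ρ_N) - Tr(M ρ̃_N)| ≤ 2(1 - (1-ε)^N) ≤ 2εN`. -/
theorem stmt3 (d N : ℕ) (hd : 0 < d) (ε : ℝ) (hε0 : 0 ≤ ε) (hε1 : ε ≤ 1)
    (M : Matrix (Fin d) (Fin d) ℂ) (hM : M.IsHermitian)
    (hMeig : ∀ i, hM.eigenvalues i ∈ Set.Icc (-1 : ℝ) 1)
    (ρ₀ : Matrix (Fin d) (Fin d) ℂ) (hρ₀ : ρ₀.PosSemidef) (hρ₀tr : ρ₀.trace = 1)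
    (G : Fin N → Matrix (Fin d) (Fin d) ℂ)
    (hG : ∀ k, G k ∈ Matrix.unitaryGroup (Fin d) ℂ)
    (ι : Fin N → Type) [∀ k, Fintype (ι k)]
    (o : ∀ k, ι k)
    (p : ∀ k, ι k → ℝ)
    (hp0 : ∀ k i, 0 ≤ p k i) (hp1 : ∀ k, ∑ i, p k i = 1)
    (hpo : ∀ k, 1 - ε ≤ p k (o k))
    (S : ∀ k, ι k → Matrix (Fin d) (Fin d) ℂ)
    (hS : ∀ k i, S k i ∈ Matrix.unitaryGroup (Fin d) ℂ)
    (hSo : ∀ k, S k (o k) = 1)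
    (ρ : ℕ → Matrix (Fin d) (Fin d) ℂ) (hρ0 : ρ 0 = ρ₀)
    (hρ : ∀ k : Fin N,
      ρ (k + 1) = ∑ i, (p k i : ℂ) • (S k i * G k * ρ k * (G k)ᴴ * (S k i)ᴴ))
    (ρt : ℕ → Matrix (Fin d) (Fin d) ℂ) (hρt0 : ρt 0 = ρ₀)
    (hρt : ∀ k : Fin N, ρt (k + 1) = G k * ρt k * (G k)ᴴ) :
    ‖(M * ρ N).trace - (M * ρt N).trace‖ ≤ 2 * (1 - (1 - ε) ^ N) ∧
      2 * (1 - (1 - ε) ^ N) ≤ 2 * ε * N := by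
  classical
  -- probability of the identity at each step
  have hpo1 : ∀ k : Fin N, p k (o k) ≤ 1 := by
    intro k
    calc p k (o k) ≤ ∑ i, p k i :=
          Finset.single_le_sum (fun i _ => hp0 k i) (Finset.mem_univ _)
      _ = 1 := hp1 k
  have hpo0 : ∀ k : Fin N, 0 ≤ p k (o k) := fun k => hp0 k (o k)
  -- the accumulated identity probability
  set q : ℕ → ℝ := fun k =>
    ∏ j ∈ Finset.univ.filter (fun j : Fin N => (j : ℕ) < k), p j (o j) with hq_def
  have hq0 : q 0 = 1 := by
    simp [hq_def]
  -- main induction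
  have main : ∀ k, k ≤ N → (ρ k).PosSemidef ∧ (ρ k).trace = 1 ∧
      (ρt k).PosSemidef ∧ (ρt k).trace = 1 ∧
      (ρ k - (q k : ℂ) • ρt k).PosSemidef ∧
      (ρ k - (q k : ℂ) • ρt k).trace = 1 - (q k : ℂ) := by
    intro k
    induction k with
    | zero =>
      intro _
      rw [hρ0, hρt0, hq0]
      simp only [Complex.ofReal_one, one_smul, sub_self]
      exact ⟨hρ₀, hρ₀tr, hρ₀, hρ₀tr, Matrix.PosSemidef.zero, by simp⟩
    | succ k ih =>
      intro hk1
      have hk : k < N := hk1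
      obtain ⟨hρP, hρT, hρtP, hρtT, hDP, hDT⟩ := ih (Nat.le_of_succ_le hk1)
      set k' : Fin N := ⟨k, hk⟩ with hk'_def
      -- step for q
      have hq_step : q (k + 1) = q k * p k' (o k') := by
        have hins : Finset.univ.filter (fun j : Fin N => (j : ℕ) < k + 1) =
            insert k' (Finset.univ.filter (fun j : Fin N => (j : ℕ) < k)) := by
          ext j
          simp only [Finset.mem_filter, Finset.mem_univ, true_and, Finset.mem_insert,
            Nat.lt_succ_iff_lt_or_eq]
          constructor
          · rintro (h | h)
            · exact Or.inr h
            · exact Or.inl (Fin.ext h)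
          · rintro (h | h)
            · exact Or.inr (by rw [h])
            · exact Or.inl h
        have hnot : k' ∉ Finset.univ.filter (fun j : Fin N => (j : ℕ) < k) := by
          simp [hk'_def]
        rw [hq_def]
        simp only
        rw [hins, Finset.prod_insert hnot, mul_comm]
      -- the combined unitaries
      set U : ι k' → Matrix (Fin d) (Fin d) ℂ := fun i => S k' i * G k' with hU_def
      have hUu : ∀ i, U i ∈ Matrix.unitaryGroup (Fin d) ℂ := fun i =>
        mul_mem (hS k' i) (hG k')
      have hrec : ρ (k + 1) = ∑ i, (p k' i : ℂ) • (U i * ρ k * (U i)ᴴ) := by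
        have := hρ k'
        simp only [hk'_def] at this
        rw [this]
        refine Finset.sum_congr rfl fun i _ => ?_
        simp only [hU_def, Matrix.conjTranspose_mul, Matrix.mul_assoc]; rfl
      have hUo : U (o k') = G k' := by
        rw [hU_def]; simp [hSo k']
      have hrect : ρt (k + 1) = U (o k') * ρt k * (U (o k'))ᴴ := by
        have := hρt k'
        simp only [hk'_def] at this
        rw [this, hUo]
      -- trace-1, PSD of ρ (k+1) and ρt (k+1)
      have hρtP' : (ρt (k + 1)).PosSemidef := by
        rw [hrect]; exact hρtP.mul_mul_conjTranspose_same _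
      have hρtT' : (ρt (k + 1)).trace = 1 := by
        rw [hrect, conj_trace_eq (hUu _), hρtT]
      have hρP' : (ρ (k + 1)).PosSemidef := by
        rw [hrec]
        refine psd_sum _ _ fun i _ => ?_
        exact psd_smul (hρP.mul_mul_conjTranspose_same _) (hp0 k' i)
      have hsum_cast : (∑ i, (p k' i : ℂ)) = 1 := by
        rw [← Complex.ofReal_sum, hp1 k', Complex.ofReal_one]
      have hρT' : (ρ (k + 1)).trace = 1 := by
        rw [hrec, Matrix.trace_sum]
        have : ∀ i : ι k', ((p k' i : ℂ) • (U i * ρ k * (U i)ᴴ)).trace = (p k' i : ℂ) := by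
          intro i
          rw [Matrix.trace_smul, conj_trace_eq (hUu i), hρT, smul_eq_mul, mul_one]
        rw [Finset.sum_congr rfl fun i _ => this i, hsum_cast]
      -- the defect decomposition
      have hsplit : ρ (k + 1) - (q (k + 1) : ℂ) • ρt (k + 1) =
          (∑ i ∈ Finset.univ.erase (o k'), (p k' i : ℂ) • (U i * ρ k * (U i)ᴴ))
          + (p k' (o k') : ℂ) •
              (U (o k') * (ρ k - (q k : ℂ) • ρt k) * (U (o k'))ᴴ) := by
        have hconj : U (o k') * (ρ k - (q k : ℂ) • ρt k) * (U (o k'))ᴴ =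
            U (o k') * ρ k * (U (o k'))ᴴ -
              (q k : ℂ) • (U (o k') * ρt k * (U (o k'))ᴴ) := by
          rw [Matrix.mul_sub, Matrix.sub_mul, Matrix.mul_smul, Matrix.smul_mul]
        have hcast : (q (k + 1) : ℂ) = (q k : ℂ) * (p k' (o k') : ℂ) := by
          rw [hq_step]; push_cast; ring
        rw [hrec, hrect, hconj, hcast,
          ← Finset.add_sum_erase _ _ (Finset.mem_univ (o k'))]
        module
      have hDP' : (ρ (k + 1) - (q (k + 1) : ℂ) • ρt (k + 1)).PosSemidef := by
        rw [hsplit]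
        refine Matrix.PosSemidef.add (psd_sum _ _ fun i _ =>
          psd_smul (hρP.mul_mul_conjTranspose_same _) (hp0 k' i)) ?_
        exact psd_smul (hDP.mul_mul_conjTranspose_same _) (hpo0 k')
      have hsum_erase : (∑ i ∈ Finset.univ.erase (o k'), (p k' i : ℂ)) =
          1 - (p k' (o k') : ℂ) := by
        have := Finset.add_sum_erase Finset.univ (fun i => (p k' i : ℂ))
          (Finset.mem_univ (o k'))
        rw [hsum_cast] at this
        linear_combination this
      have hDT' : (ρ (k + 1) - (q (k + 1) : ℂ) • ρt (k + 1)).trace =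
          1 - (q (k + 1) : ℂ) := by
        rw [hsplit, Matrix.trace_add, Matrix.trace_sum]
        have h1 : ∀ i ∈ Finset.univ.erase (o k'),
            ((p k' i : ℂ) • (U i * ρ k * (U i)ᴴ)).trace = (p k' i : ℂ) := by
          intro i _
          rw [Matrix.trace_smul, conj_trace_eq (hUu i), hρT, smul_eq_mul, mul_one]
        rw [Finset.sum_congr rfl h1, hsum_erase, Matrix.trace_smul,
          conj_trace_eq (hUu _), hDT, smul_eq_mul]
        have hcast : (q (k + 1) : ℂ) = (q k : ℂ) * (p k' (o k') : ℂ) := by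
          rw [hq_step]; push_cast; ring
        rw [hcast]; ring
      exact ⟨hρP', hρT', hρtP', hρtT', hDP', hDT'⟩
  obtain ⟨hρP, hρT, hρtP, hρtT, hDP, hDT⟩ := main N le_rfl
  -- bounds on q N
  have hfilt : Finset.univ.filter (fun j : Fin N => (j : ℕ) < N) = Finset.univ := by
    ext j; simp [j.is_lt]
  have hqN_lb : (1 - ε) ^ N ≤ q N := by
    rw [hq_def]
    simp only [hfilt]
    calc (1 - ε) ^ N = ∏ _j : Fin N, (1 - ε) := by
          rw [Finset.prod_const, Finset.card_univ, Fintype.card_fin]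
      _ ≤ ∏ j : Fin N, p j (o j) :=
          Finset.prod_le_prod (fun _ _ => by linarith) (fun j _ => hpo j)
  have hqN_ub : q N ≤ 1 := by
    rw [hq_def]
    exact Finset.prod_le_one (fun j _ => hp0 j (o j)) (fun j _ => hpo1 j)
  -- PSD bounds from the eigenvalues of M
  have h1M : (1 - M).PosSemidef := one_sub_psd hM fun i => (hMeig i).2
  have h2M : (1 + M).PosSemidef := one_add_psd hM fun i => (hMeig i).1
  -- decompose the difference
  have hdecomp : (M * ρ N).trace - (M * ρt N).trace =
      (M * (ρ N - (q N : ℂ) • ρt N)).trace + ((q N : ℂ) - 1) * (M * ρt N).trace := by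
    rw [Matrix.mul_sub, Matrix.trace_sub, Matrix.mul_smul, Matrix.trace_smul, smul_eq_mul]
    ring
  have hb1 : ‖(M * (ρ N - (q N : ℂ) • ρt N)).trace‖ ≤ 1 - q N := by
    have := abs_trace_mul_le h1M h2M hDP
    rw [hDT] at this
    simpa using this
  have hb2 : ‖(M * ρt N).trace‖ ≤ 1 := by
    have := abs_trace_mul_le h1M h2M hρtP
    rw [hρtT] at this
    simpa using this
  have hb3 : ‖(q N : ℂ) - 1‖ = 1 - q N := by
    rw [show ((q N : ℂ) - 1) = ((q N - 1 : ℝ) : ℂ) by push_cast; ring,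
      Complex.norm_real, Real.norm_eq_abs, abs_of_nonpos (by linarith)]
    ring
  constructor
  · calc ‖(M * ρ N).trace - (M * ρt N).trace‖
        = ‖(M * (ρ N - (q N : ℂ) • ρt N)).trace
            + ((q N : ℂ) - 1) * (M * ρt N).trace‖ := by rw [hdecomp]
      _ ≤ ‖(M * (ρ N - (q N : ℂ) • ρt N)).trace‖
            + ‖((q N : ℂ) - 1) * (M * ρt N).trace‖ := norm_add_le _ _
      _ = ‖(M * (ρ N - (q N : ℂ) • ρt N)).trace‖
            + ‖(q N : ℂ) - 1‖ * ‖(M * ρt N).trace‖ := by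
          rw [norm_mul]
      _ ≤ (1 - q N) + (1 - q N) * 1 := by
          refine add_le_add hb1 ?_
          rw [hb3]
          exact mul_le_mul_of_nonneg_left hb2 (by linarith)
      _ ≤ 2 * (1 - (1 - ε) ^ N) := by linarith
  · have hb := one_add_mul_le_pow (a := -ε) (by linarith) N
    have : (1 + -ε) ^ N = (1 - ε) ^ N := by ring_nf
    rw [this] at hb
    have : 1 - (N : ℝ) * ε ≤ (1 - ε) ^ N := by linarith
    nlinarith [this]
end

section
/- Let d, N be natural numbers and M a d×d Hermitian complex matrix all of whose eigenvalues lie in [−1, 1]. Let ρ₀ be a d×d density matrix, let G₁,…,G_N be d×d unitary matrices, and for each k = 1,…,N let I_k be a finite index set, p_k : I_k → ℝ a probability vector with distinguished index 1 ∈ I_k, and S_{k,i} (i ∈ I_k) unitary matrices with S_{k,1} = I. Define recursively ρ_k = Σ_{i ∈ I_k} p_k(i) · S_{k,i} G_k ρ_{k−1} G_k† S_{k,i}†, and ρ̃_k = G_k ρ̃_{k−1} G_k† with ρ̃₀ = ρ₀. Then |Tr(M ρ_N) − Tr(M ρ̃_N)| ≤ (|Tr(M ρ̃_N)| + 1) ·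 (1 − ∏_{k=1}^{N} p_k(1)). -/
open scoped BigOperators
open Matrix
open scoped ComplexOrder

section aux

variable {d : ℕ}

lemma aux_trace_conj (U X : Matrix (Fin d) (Fin d) ℂ)
    (hU : U ∈ Matrix.unitaryGroup (Fin d) ℂ) : (U * X * Uᴴ).trace = X.trace := by
  have h : Uᴴ * U = 1 := by
    simpa [Matrix.star_eq_conjTranspose] using (Matrix.mem_unitaryGroup_iff'.mp hU)
  rw [Matrix.trace_mul_cycle, h, Matrix.one_mul]

lemma aux_psd_real_smul {A : Matrix (Fin d) (Fin d) ℂ} (hA : A.PosSemidef) {c : ℝ}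
    (hc : 0 ≤ c) : ((c : ℂ) • A).PosSemidef := by
  constructor
  · unfold Matrix.IsHermitian
    rw [conjTranspose_smul, hA.1]
    simp
  · exact (hA.smul (a := (c : ℂ)) (by exact_mod_cast hc)).2

lemma aux_psd_sum {κ : Type*} (s : Finset κ) (f : κ → Matrix (Fin d) (Fin d) ℂ)
    (h : ∀ i ∈ s, (f i).PosSemidef) : (∑ i ∈ s, f i).PosSemidef :=
  Finset.sum_induction f _ (fun _ _ ha hb => ha.add hb) Matrix.PosSemidef.zero h

lemma aux_diag_nonneg {A : Matrix (Fin d) (Fin d) ℂ} (hA : A.PosSemidef) (i : Fin d) :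
    0 ≤ A i i := by
  exact hA.diag_nonneg

/-- key bound: `|Tr(M τ)| ≤ Re (Tr τ)` for Hermitian `M` with eigenvalues in `[-1,1]`
and PSD `τ`. -/
lemma aux_trace_bound (M : Matrix (Fin d) (Fin d) ℂ) (hM : M.IsHermitian)
    (hMeig : ∀ i, |hM.eigenvalues i| ≤ 1) (τ : Matrix (Fin d) (Fin d) ℂ)
    (hτ : τ.PosSemidef) :
    ‖(M * τ).trace‖ ≤ (τ.trace).re := by
  classical
  set U : Matrix (Fin d) (Fin d) ℂ := (hM.eigenvectorUnitary : Matrix (Fin d) (Fin d) ℂ)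
    with hUdef
  have hU : U ∈ Matrix.unitaryGroup (Fin d) ℂ := hM.eigenvectorUnitary.2
  have h1 : U * Uᴴ = 1 := by
    simpa [Matrix.star_eq_conjTranspose] using (Matrix.mem_unitaryGroup_iff.mp hU)
  set D : Matrix (Fin d) (Fin d) ℂ :=
    Matrix.diagonal (RCLike.ofReal ∘ hM.eigenvalues) with hDdef
  set B : Matrix (Fin d) (Fin d) ℂ := Uᴴ * τ * U with hBdef
  have hB : B.PosSemidef := hτ.conjTranspose_mul_mul_same U
  have hBt : B.trace = τ.trace := by
    rw [hBdef, Matrix.trace_mul_cycle, h1, Matrix.one_mul]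
  have hMτ : M * τ = U * (D * B) * Uᴴ := by
    have hMs : M = U * D * Uᴴ := by
      simpa [Matrix.star_eq_conjTranspose, hUdef, hDdef] using hM.spectral_theorem
    rw [hMs, hBdef]
    simp only [Matrix.mul_assoc, h1, Matrix.mul_one]
  have htr : (M * τ).trace = (D * B).trace := by
    rw [hMτ, aux_trace_conj _ _ hU]
  have hDB : (D * B).trace = ∑ i, (hM.eigenvalues i : ℂ) * B i i := by
    simp [Matrix.trace, Matrix.diag, hDdef, Matrix.diagonal_mul]
  have hdiag : ∀ i, 0 ≤ (B i i).re ∧ (B i i).im = 0 := by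
    intro i
    obtain ⟨h1', h2'⟩ := Complex.nonneg_iff.mp (aux_diag_nonneg hB i)
    exact ⟨h1', h2'.symm⟩
  have habs : ∀ i, ‖B i i‖ = (B i i).re := by
    intro i
    have : B i i = ((B i i).re : ℂ) := Complex.ext rfl (by simp [(hdiag i).2])
    rw [this]
    simp [Complex.norm_real, Real.norm_eq_abs, abs_of_nonneg (hdiag i).1]
  rw [htr, hDB]
  calc ‖∑ i, (hM.eigenvalues i : ℂ) * B i i‖
      ≤ ∑ i, ‖(hM.eigenvalues i : ℂ) * B i i‖ := norm_sum_le _ _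
    _ ≤ ∑ i, (B i i).re := by
        refine Finset.sum_le_sum fun i _ => ?_
        rw [norm_mul, Complex.norm_real, Real.norm_eq_abs, habs i]
        calc |hM.eigenvalues i| * (B i i).re ≤ 1 * (B i i).re :=
              mul_le_mul_of_nonneg_right (hMeig i) (hdiag i).1
          _ = (B i i).re := one_mul _
    _ = (B.trace).re := by
        rw [Matrix.trace]
        simp [Matrix.diag, Complex.re_sum]
    _ = (τ.trace).re := by rw [hBt]

end aux

/-- intermediate inequality in the proof of Proposition 2:
`|Tr(M ρ_N) - Tr(M ρ̃_N)| ≤ (|Tr(M ρ̃_N)| + 1)(1 - ∏_k p_k(1))`. -/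
theorem stmt4 (d N : ℕ) (hd : 0 < d)
    (M : Matrix (Fin d) (Fin d) ℂ) (hM : M.IsHermitian)
    (hMeig : ∀ i, hM.eigenvalues i ∈ Set.Icc (-1 : ℝ) 1)
    (ρ₀ : Matrix (Fin d) (Fin d) ℂ) (hρ₀ : ρ₀.PosSemidef) (hρ₀tr : ρ₀.trace = 1)
    (G : Fin N → Matrix (Fin d) (Fin d) ℂ)
    (hG : ∀ k, G k ∈ Matrix.unitaryGroup (Fin d) ℂ)
    (ι : Fin N → Type) [∀ k, Fintype (ι k)]
    (o : ∀ k, ι k)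
    (p : ∀ k, ι k → ℝ)
    (hp0 : ∀ k i, 0 ≤ p k i) (hp1 : ∀ k, ∑ i, p k i = 1)
    (S : ∀ k, ι k → Matrix (Fin d) (Fin d) ℂ)
    (hS : ∀ k i, S k i ∈ Matrix.unitaryGroup (Fin d) ℂ)
    (hSo : ∀ k, S k (o k) = 1)
    (ρ : ℕ → Matrix (Fin d) (Fin d) ℂ) (hρ0 : ρ 0 = ρ₀)
    (hρ : ∀ k : Fin N,
      ρ (k + 1) = ∑ i, (p k i : ℂ) • (S k i * G k * ρ k * (G k)ᴴ * (S k i)ᴴ))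
    (ρt : ℕ → Matrix (Fin d) (Fin d) ℂ) (hρt0 : ρt 0 = ρ₀)
    (hρt : ∀ k : Fin N, ρt (k + 1) = G k * ρt k * (G k)ᴴ) :
    ‖(M * ρ N).trace - (M * ρt N).trace‖ ≤
      (‖(M * ρt N).trace‖ + 1) * (1 - ∏ k, p k (o k)) := by
  classical
  set q : ℕ → ℝ := fun j => if h : j < N then p ⟨j, h⟩ (o ⟨j, h⟩) else 1 with hq
  set P : ℕ → ℝ := fun n => ∏ j ∈ Finset.range n, q j with hP
  have hq0 : ∀ j, 0 ≤ q j := by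
    intro j
    by_cases h : j < N
    · simp only [hq, dif_pos h]; exact hp0 _ _
    · simp [hq, h]
  have hq1 : ∀ j, q j ≤ 1 := by
    intro j
    by_cases h : j < N
    · simp only [hq, dif_pos h]
      calc p ⟨j, h⟩ (o ⟨j, h⟩) ≤ ∑ i, p ⟨j, h⟩ i :=
            Finset.single_le_sum (fun i _ => hp0 _ i) (Finset.mem_univ _)
        _ = 1 := hp1 _
    · simp [hq, h]
  have hP0 : ∀ n, 0 ≤ P n := fun n => Finset.prod_nonneg fun j _ => hq0 j
  have hP1 : ∀ n, P n ≤ 1 := fun n =>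
    Finset.prod_le_one (fun j _ => hq0 j) (fun j _ => hq1 j)
  have key : ∀ n, n ≤ N → (ρ n).PosSemidef ∧ (ρ n).trace = 1 ∧ (ρt n).PosSemidef ∧
      (ρt n).trace = 1 ∧ (ρ n - (P n : ℂ) • ρt n).PosSemidef := by
    intro n
    induction n with
    | zero =>
      intro _
      have hP00 : P 0 = 1 := by simp [hP]
      refine ⟨hρ0 ▸ hρ₀, hρ0 ▸ hρ₀tr, hρt0 ▸ hρ₀, hρt0 ▸ hρ₀tr, ?_⟩
      rw [hρ0, hρt0, hP00]
      simpa using Matrix.PosSemidef.zero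
    | succ n ih =>
      intro hn1
      have hn : n < N := hn1
      obtain ⟨hps, htr, hpst, htrt, hdiff⟩ := ih (Nat.le_of_lt hn)
      set k : Fin N := ⟨n, hn⟩ with hk
      have hρk : ρ (n + 1) = ∑ i, (p k i : ℂ) • (S k i * G k * ρ n * (G k)ᴴ * (S k i)ᴴ) :=
        hρ k
      have hρtk : ρt (n + 1) = G k * ρt n * (G k)ᴴ := hρt k
      have hre : ∀ i, S k i * G k * ρ n * (G k)ᴴ * (S k i)ᴴ
          = (S k i * G k) * ρ n * (S k i * G k)ᴴ := by
        intro i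
        rw [Matrix.conjTranspose_mul, ← Matrix.mul_assoc]
      have hSGu : ∀ i, S k i * G k ∈ Matrix.unitaryGroup (Fin d) ℂ := fun i =>
        mul_mem (hS k i) (hG k)
      have hpsd1 : (ρ (n + 1)).PosSemidef := by
        rw [hρk]
        refine aux_psd_sum _ _ fun i _ => ?_
        rw [hre i]
        exact aux_psd_real_smul (hps.mul_mul_conjTranspose_same _) (hp0 k i)
      have htr1 : (ρ (n + 1)).trace = 1 := by
        rw [hρk, Matrix.trace_sum]
        have : ∀ i, ((p k i : ℂ) • (S k i * G k * ρ n * (G k)ᴴ * (S k i)ᴴ)).trace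
            = (p k i : ℂ) := by
          intro i
          rw [Matrix.trace_smul, hre i, aux_trace_conj _ _ (hSGu i), htr, smul_eq_mul,
            mul_one]
        rw [Finset.sum_congr rfl fun i _ => this i]
        exact_mod_cast congrArg (Complex.ofReal) (hp1 k)
      have hpst1 : (ρt (n + 1)).PosSemidef := by
        rw [hρtk]; exact hpst.mul_mul_conjTranspose_same _
      have htrt1 : (ρt (n + 1)).trace = 1 := by
        rw [hρtk, aux_trace_conj _ _ (hG k), htrt]
      have hPs : P (n + 1) = P n * q n := Finset.prod_range_succ _ _
      have hqn : q n = p k (o k) := by simp [hq, hn, hk]; rfl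
      have decomp : ρ (n + 1) - (P (n + 1) : ℂ) • ρt (n + 1)
          = (∑ i ∈ Finset.univ.erase (o k),
              (p k i : ℂ) • (S k i * G k * ρ n * (G k)ᴴ * (S k i)ᴴ))
            + (p k (o k) : ℂ) • (G k * (ρ n - (P n : ℂ) • ρt n) * (G k)ᴴ) := by
        rw [hρk, hρtk, hPs, hqn]
        rw [← Finset.sum_erase_add _ _ (Finset.mem_univ (o k))]
        rw [hSo k]
        push_cast
        simp only [Matrix.conjTranspose_one, Matrix.one_mul, Matrix.mul_one,
          Matrix.mul_sub, Matrix.sub_mul, Matrix.mul_smul, Matrix.smul_mul]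
        module
      refine ⟨hpsd1, htr1, hpst1, htrt1, ?_⟩
      rw [decomp]
      refine Matrix.PosSemidef.add (aux_psd_sum _ _ fun i _ => ?_) ?_
      · rw [hre i]
        exact aux_psd_real_smul (hps.mul_mul_conjTranspose_same _) (hp0 k i)
      · exact aux_psd_real_smul (hdiff.mul_mul_conjTranspose_same _) (hp0 k (o k))
  obtain ⟨hps, htr, hpst, htrt, hdiff⟩ := key N le_rfl
  have hPN : P N = ∏ k, p k (o k) := by
    show (∏ j ∈ Finset.range N, q j) = _
    rw [← Fin.prod_univ_eq_prod_range q N]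
    exact Finset.prod_congr rfl fun k _ => by simp [hq, k.isLt]
  have htrτ : ((ρ N - (P N : ℂ) • ρt N).trace).re = 1 - P N := by
    rw [Matrix.trace_sub, Matrix.trace_smul, htr, htrt]
    simp
  have hbound := aux_trace_bound M hM
    (fun i => abs_le.mpr ⟨(hMeig i).1, (hMeig i).2⟩) _ hdiff
  rw [htrτ] at hbound
  have h1P : 0 ≤ 1 - P N := sub_nonneg.mpr (hP1 N)
  have hsplit : (M * ρ N).trace - (M * ρt N).trace
      = (M * (ρ N - (P N : ℂ) • ρt N)).trace - ((1 - P N : ℝ) : ℂ) * (M * ρt N).trace := by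
    rw [Matrix.mul_sub, Matrix.trace_sub, Matrix.mul_smul, Matrix.trace_smul,
      smul_eq_mul]
    push_cast
    ring
  rw [← hPN, hsplit]
  calc ‖(M * (ρ N - (P N : ℂ) • ρt N)).trace
        - ((1 - P N : ℝ) : ℂ) * (M * ρt N).trace‖
      ≤ ‖(M * (ρ N - (P N : ℂ) • ρt N)).trace‖
        + ‖((1 - P N : ℝ) : ℂ) * (M * ρt N).trace‖ := by
        have h := norm_add_le ((M * (ρ N - (P N : ℂ) • ρt N)).trace)
          (-(((1 - P N : ℝ) : ℂ) * (M * ρt N).trace))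
        simpa [sub_eq_add_neg] using h
    _ ≤ (1 - P N) + (1 - P N) * ‖(M * ρt N).trace‖ := by
        refine add_le_add hbound ?_
        rw [norm_mul, Complex.norm_real, Real.norm_eq_abs, abs_of_nonneg h1P]
    _ = (‖(M * ρt N).trace‖ + 1) * (1 - P N) := by ring
end

section
/- Let d, N be natural numbers and ξ ≥ 0 a real number. On a probability space let c₁,…,c_N be mutually independent square-integrable random vectors in ℝ^d satisfying, for every k and all coordinates i, j: E[c_k(i)] = 1 and |E[c_k(i) c_k(j)] − 1| ≤ ξ. Let G₁,…,G_N be d×d real orthogonal matrices and v₀ ∈ ℝ^d a vector with ‖v₀‖ = 1. Define the random vectors V₀ = v₀ and V_k = diag(c_k) · G_k · V_{k−1} for k = 1,…,N, and let μ = G_N ⋯ G₁ v₀. Then for every w ∈ ℝ^d, E[(wᵀ V_N − wᵀ μ)²] ≤ ‖w‖² (exp(N ξ) − 1). -/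
open scoped BigOperators
open Matrix MeasureTheory ProbabilityTheory

/-- Euclidean norm of a real vector. -/
noncomputable def enorm₂ {ι : Type*} [Fintype ι] (v : ι → ℝ) : ℝ :=
  Real.sqrt (∑ i, v i ^ 2)


/-- a.e.-equal families preserve mutual independence. -/
lemma iIndepFun_of_ae_eq {Ω ι : Type*} [MeasurableSpace Ω] {μ : Measure Ω}
    {β : ι → Type*} [m : ∀ i, MeasurableSpace (β i)] {f f' : ∀ i, Ω → β i}
    (h : iIndepFun f μ) (hae : ∀ i, f i =ᵐ[μ] f' i) : iIndepFun f' μ := by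
  rw [iIndepFun_iff_measure_inter_preimage_eq_mul] at h ⊢
  intro S sets hsets
  have h1 : ∀ i : ι, (f i ⁻¹' sets i : Set Ω) =ᵐ[μ] (f' i ⁻¹' sets i) := by
    intro i
    filter_upwards [hae i] with ω hω
    change (f i ω ∈ sets i) = (f' i ω ∈ sets i)
    rw [hω]
  have h2 : (⋂ i ∈ S, f' i ⁻¹' sets i : Set Ω) =ᵐ[μ] (⋂ i ∈ S, f i ⁻¹' sets i) := by
    have hball : ∀ᵐ ω ∂μ, ∀ i ∈ S, f i ω = f' i ω :=
      (MeasureTheory.ae_ball_iff S.countable_toSet).2 fun i _ => hae i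
    filter_upwards [hball] with ω hω
    change (ω ∈ ⋂ i ∈ S, f' i ⁻¹' sets i) = (ω ∈ ⋂ i ∈ S, f i ⁻¹' sets i)
    simp only [Set.mem_iInter₂, Set.mem_preimage, eq_iff_iff]
    constructor
    · intro H j hj; rw [hω j hj]; exact H j hj
    · intro H j hj; rw [← hω j hj]; exact H j hj
  rw [measure_congr h2, h S hsets]
  exact Finset.prod_congr rfl fun i _ => measure_congr (h1 i)

/-- Orthogonal matrices preserve the sum of squares. -/
lemma orth_sum_sq {d : ℕ} {A : Matrix (Fin d) (Fin d) ℝ}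
    (hA : A ∈ Matrix.orthogonalGroup (Fin d) ℝ) (v : Fin d → ℝ) :
    ∑ i, (A.mulVec v i) ^ 2 = ∑ i, v i ^ 2 := by
  have hstar : star A = Aᵀ := by
    ext i j; simp [Matrix.star_apply]
  have hATA : Aᵀ * A = 1 := by rw [← hstar]; exact hA.1
  have key : A.mulVec v ⬝ᵥ A.mulVec v = v ⬝ᵥ v := by
    calc A.mulVec v ⬝ᵥ A.mulVec v = ((A.mulVec v) ᵥ* A) ⬝ᵥ v := Matrix.dotProduct_mulVec _ _ _
      _ = ((v ᵥ* Aᵀ) ᵥ* A) ⬝ᵥ v := by rw [Matrix.vecMul_transpose]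
      _ = (v ᵥ* (Aᵀ * A)) ⬝ᵥ v := by rw [Matrix.vecMul_vecMul]
      _ = v ⬝ᵥ v := by rw [hATA, Matrix.vecMul_one]
  simpa [dotProduct, sq] using key

/-- The deterministic recursion map. -/
noncomputable def PhiFun (d : ℕ) (v₀ : Fin d → ℝ) (G' : ℕ → Matrix (Fin d) (Fin d) ℝ) :
    (k : ℕ) → (Fin k → Fin d → ℝ) → (Fin d → ℝ)
  | 0, _ => v₀
  | (k+1), x => fun i =>
      x (Fin.last k) i * (G' k).mulVec (PhiFun d v₀ G' k (fun j => x j.castSucc)) i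

lemma PhiFun_continuous (d : ℕ) (v₀ : Fin d → ℝ) (G' : ℕ → Matrix (Fin d) (Fin d) ℝ) :
    ∀ k, Continuous (PhiFun d v₀ G' k) := by
  intro k
  induction k with
  | zero => exact continuous_const
  | succ k ih =>
    show Continuous fun x : Fin (k+1) → Fin d → ℝ => fun i =>
      x (Fin.last k) i * (G' k).mulVec (PhiFun d v₀ G' k (fun j => x j.castSucc)) i
    refine continuous_pi fun i => Continuous.mul ?_ ?_
    · exact (continuous_apply i).comp (continuous_apply (Fin.last k))
    · show Continuous fun x : Fin (k+1) → Fin d → ℝ =>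
        ∑ j, G' k i j * PhiFun d v₀ G' k (fun j => x j.castSucc) j
      refine continuous_finset_sum _ fun j _ => Continuous.mul continuous_const ?_
      refine (continuous_apply j).comp (ih.comp ?_)
      exact continuous_pi fun j' => continuous_apply _
  
/-- deterministic mean sequence -/
noncomputable def MuSeq (d : ℕ) (v₀ : Fin d → ℝ) (G' : ℕ → Matrix (Fin d) (Fin d) ℝ) :
    ℕ → Fin d → ℝ
  | 0 => v₀
  | (k+1) => (G' k).mulVec (MuSeq d v₀ G' k)

lemma measurable_mulVec_apply {d : ℕ} (A : Matrix (Fin d) (Fin d) ℝ) (i : Fin d) :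
    Measurable fun v : Fin d → ℝ => A.mulVec v i := by
  show Measurable fun v : Fin d → ℝ => ∑ j, A i j * v j
  exact Finset.measurable_sum _ fun j _ => (measurable_pi_apply j).const_mul _

/-- Product of two independent L² random variables is L². -/
lemma Memℒp.indep_mul {Ω : Type*} [MeasurableSpace Ω] {μ : Measure Ω} {X Y : Ω → ℝ}
    (hXY : IndepFun X Y μ) (hX : MemLp X 2 μ) (hY : MemLp Y 2 μ) :
    MemLp (fun ω => X ω * Y ω) 2 μ := by
  have hm : AEStronglyMeasurable (fun ω => X ω * Y ω) μ := hX.1.mul hY.1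
  rw [memLp_two_iff_integrable_sq hm]
  have hXY2 : IndepFun (fun ω => X ω ^ 2) (fun ω => Y ω ^ 2) μ :=
    hXY.comp (measurable_id.pow_const 2) (measurable_id.pow_const 2)
  have hiX : Integrable (fun ω => X ω ^ 2) μ := (memLp_two_iff_integrable_sq hX.1).1 hX
  have hiY : Integrable (fun ω => Y ω ^ 2) μ := (memLp_two_iff_integrable_sq hY.1).1 hY
  have := hXY2.integrable_mul hiX hiY
  simpa [mul_pow, Pi.mul_def] using this

/-- For independent L² variables, second moments of the product factor. -/
lemma indep_integral_mul {Ω : Type*} [MeasurableSpace Ω] {μ : Measure Ω}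
    [IsFiniteMeasure μ] {X Y : Ω → ℝ}
    (hXY : IndepFun X Y μ) (hX : MemLp X 2 μ) (hY : MemLp Y 2 μ) :
    ∫ ω, X ω * Y ω ∂μ = (∫ ω, X ω ∂μ) * ∫ ω, Y ω ∂μ :=
  hXY.integral_fun_mul_eq_mul_integral (hX.integrable one_le_two).1 (hY.integrable one_le_two).1


/-- core recursion of Proposition 3 for Pauli channels: under independent
random diagonal rescalings `diag(c_k)` with unit means and second moments within `ξ` of `1`,
the mean-square error of `wᵀ V_N` about `wᵀ μ` is at most `‖w‖²(exp(Nξ) - 1)`. -/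
theorem stmt5 (d N : ℕ) (ξ : ℝ) (hξ : 0 ≤ ξ)
    {Ω : Type*} [MeasurableSpace Ω] (μ : Measure Ω) [IsProbabilityMeasure μ]
    (c : Fin N → Ω → (Fin d → ℝ))
    (hindep : iIndepFun c μ)
    (hL2 : ∀ k i, MemLp (fun ω => c k ω i) 2 μ)
    (hmean : ∀ k i, ∫ ω, c k ω i ∂μ = 1)
    (hsec : ∀ k i j, |(∫ ω, c k ω i * c k ω j ∂μ) - 1| ≤ ξ)
    (G : Fin N → Matrix (Fin d) (Fin d) ℝ)
    (hG : ∀ k, G k ∈ Matrix.orthogonalGroup (Fin d) ℝ)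
    (v₀ : Fin d → ℝ) (hv₀ : enorm₂ v₀ = 1)
    (V : ℕ → Ω → (Fin d → ℝ)) (hV0 : ∀ ω, V 0 ω = v₀)
    (hV : ∀ k : Fin N, ∀ ω, V (k + 1) ω = fun i => c k ω i * (G k).mulVec (V k ω) i)
    (μN : Fin d → ℝ) (hμN : μN = (((List.ofFn G).reverse).prod).mulVec v₀) :
    ∀ w : Fin d → ℝ,
      ∫ ω, (w ⬝ᵥ V N ω - w ⬝ᵥ μN) ^ 2 ∂μ ≤ enorm₂ w ^ 2 * (Real.exp (N * ξ) - 1) := by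
  classical
  -- sum of squares of v₀ is 1
  have hsum_v₀ : ∑ i, v₀ i ^ 2 = 1 := Real.sqrt_eq_one.mp hv₀
  -- measurable modifications of c
  set c' : Fin N → Ω → Fin d → ℝ :=
    fun k ω i => (hL2 k i).1.mk (fun ω => c k ω i) ω with hc'def
  have hc'meas : ∀ k, Measurable (c' k) := fun k =>
    measurable_pi_lambda _ fun i => ((hL2 k i).1.stronglyMeasurable_mk).measurable
  have hc'ae_i : ∀ k i, (fun ω => c k ω i) =ᵐ[μ] fun ω => c' k ω i := fun k i =>
    (hL2 k i).1.ae_eq_mk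
  have hc'ae : ∀ k, c k =ᵐ[μ] c' k := fun k => by
    have h2 : ∀ᵐ ω ∂μ, ∀ i, c k ω i = c' k ω i := ae_all_iff.2 fun i => hc'ae_i k i
    filter_upwards [h2] with ω hω
    funext i; exact hω i
  have hindep' : iIndepFun c' μ := iIndepFun_of_ae_eq hindep hc'ae
  have hL2' : ∀ k i, MemLp (fun ω => c' k ω i) 2 μ := fun k i => (hL2 k i).ae_eq (hc'ae_i k i)
  have hmean' : ∀ k i, ∫ ω, c' k ω i ∂μ = 1 := fun k i => by
    rw [← integral_congr_ae (hc'ae_i k i)]; exact hmean k i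
  have hsec' : ∀ k i j, |(∫ ω, c' k ω i * c' k ω j ∂μ) - 1| ≤ ξ := fun k i j => by
    have h : (fun ω => c k ω i * c k ω j) =ᵐ[μ] fun ω => c' k ω i * c' k ω j := by
      filter_upwards [hc'ae_i k i, hc'ae_i k j] with ω h1 h2; rw [h1, h2]
    rw [← integral_congr_ae h]; exact hsec k i j
  -- totalized versions
  set G' : ℕ → Matrix (Fin d) (Fin d) ℝ := fun k => if h : k < N then G ⟨k, h⟩ else 1 with hG'def
  set cext : ℕ → Ω → Fin d → ℝ :=
    fun m ω => if h : m < N then c' ⟨m, h⟩ ω else 0 with hcextdef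
  set V' : ℕ → Ω → Fin d → ℝ :=
    fun k ω => PhiFun d v₀ G' k (fun j : Fin k => cext (j : ℕ) ω) with hV'def
  have hV'meas : ∀ k, Measurable (V' k) := by
    intro k
    apply (PhiFun_continuous d v₀ G' k).measurable.comp
    apply measurable_pi_lambda
    intro j
    by_cases h : (j : ℕ) < N
    · simp only [hcextdef, dif_pos h]; exact hc'meas ⟨j, h⟩
    · simp only [hcextdef, dif_neg h]; exact measurable_const
  -- the recursion for V'
  have hV'rec : ∀ (k : ℕ) (hk : k < N), ∀ ω,
      V' (k + 1) ω = fun i => c' ⟨k, hk⟩ ω i * (G ⟨k, hk⟩).mulVec (V' k ω) i := by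
    intro k hk ω
    show PhiFun d v₀ G' (k + 1) (fun j : Fin (k+1) => cext (j : ℕ) ω) = _
    funext i
    simp only [PhiFun]
    have h1 : cext ((Fin.last k : Fin (k+1)) : ℕ) ω = c' ⟨k, hk⟩ ω := by
      simp only [hcextdef, Fin.val_last, dif_pos hk]
    have h2 : (fun j : Fin k => cext ((Fin.castSucc j : Fin (k+1)) : ℕ) ω)
        = fun j : Fin k => cext (j : ℕ) ω := by
      funext j; rw [Fin.coe_castSucc]
    rw [h1, h2]
    have h3 : G' k = G ⟨k, hk⟩ := by simp only [hG'def, dif_pos hk]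
    rw [h3]
  -- V agrees a.e. with V'
  have hVae : ∀ k, k ≤ N → V k =ᵐ[μ] V' k := by
    intro k
    induction k with
    | zero =>
      intro _
      refine Filter.Eventually.of_forall fun ω => ?_
      rw [hV0 ω]
      show v₀ = PhiFun d v₀ G' 0 _
      simp only [PhiFun]
    | succ k ih =>
      intro hk1
      have hk : k < N := Nat.lt_of_succ_le hk1
      filter_upwards [ih (le_of_lt hk), hc'ae ⟨k, hk⟩] with ω h1 h2
      have hstep : V (k + 1) ω
          = fun i => c ⟨k, hk⟩ ω i * (G ⟨k, hk⟩).mulVec (V k ω) i := hV ⟨k, hk⟩ ω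
      rw [hstep, hV'rec k hk ω]
      funext i
      rw [h1, h2]
  -- independence of c' k from V' k
  have hIndep : ∀ (k : ℕ) (hk : k < N), IndepFun (c' ⟨k, hk⟩) (V' k) μ := by
    intro k hk
    set T : Finset (Fin N) := Finset.univ.filter (fun i => (i : ℕ) < k) with hT
    have hdisj : Disjoint ({(⟨k, hk⟩ : Fin N)} : Finset (Fin N)) T := by
      rw [Finset.disjoint_left]
      intro a ha haT
      rw [Finset.mem_singleton] at ha
      rw [hT, Finset.mem_filter] at haT
      rw [ha] at haT
      exact absurd haT.2 (lt_irrefl k)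
    have hbase := hindep'.indepFun_finset {⟨k, hk⟩} T hdisj hc'meas
    have hmemT : ∀ j : Fin k, (⟨(j : ℕ), lt_trans j.2 hk⟩ : Fin N) ∈ T := fun j => by
      rw [hT, Finset.mem_filter]; exact ⟨Finset.mem_univ _, j.2⟩
    set φ : ((i : ({(⟨k, hk⟩ : Fin N)} : Finset (Fin N))) → Fin d → ℝ) → Fin d → ℝ :=
      fun x => x ⟨⟨k, hk⟩, Finset.mem_singleton_self _⟩ with hφdef
    have hφm : Measurable φ := measurable_pi_apply _
    set ψ : ((i : T) → Fin d → ℝ) → Fin d → ℝ := fun y =>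
      PhiFun d v₀ G' k (fun j : Fin k => y ⟨⟨(j : ℕ), lt_trans j.2 hk⟩, hmemT j⟩) with hψdef
    have hψm : Measurable ψ := by
      apply (PhiFun_continuous d v₀ G' k).measurable.comp
      exact measurable_pi_lambda _ fun j => measurable_pi_apply _
    have hcomp := hbase.comp hφm hψm
    have e1 : (φ ∘ fun ω (i : ({(⟨k, hk⟩ : Fin N)} : Finset (Fin N))) => c' i ω)
        = c' ⟨k, hk⟩ := rfl
    have e2 : (ψ ∘ fun ω (i : T) => c' i ω) = V' k := by
      funext ω
      have harg : (fun j : Fin k => c' ⟨(j : ℕ), lt_trans j.2 hk⟩ ω)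
          = fun j : Fin k => cext (j : ℕ) ω := by
        funext j
        rw [hcextdef]
        simp only [dif_pos (lt_trans j.2 hk)]
      show PhiFun d v₀ G' k (fun j : Fin k => c' ⟨(j : ℕ), lt_trans j.2 hk⟩ ω)
          = PhiFun d v₀ G' k (fun j : Fin k => cext (j : ℕ) ω)
      exact congrArg _ harg
    rw [e1, e2] at hcomp
    exact hcomp
  -- scalar independences
  have hIndepS : ∀ (k : ℕ) (hk : k < N) (i : Fin d),
      IndepFun (fun ω => c' ⟨k, hk⟩ ω i) (fun ω => (G ⟨k, hk⟩).mulVec (V' k ω) i) μ :=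
    fun k hk i =>
      (hIndep k hk).comp (measurable_pi_apply i) (measurable_mulVec_apply (G ⟨k, hk⟩) i)
  -- L² bounds for V'
  have hVL2 : ∀ k, k ≤ N → ∀ i, MemLp (fun ω => V' k ω i) 2 μ := by
    intro k
    induction k with
    | zero =>
      intro _ i
      have : (fun ω => V' 0 ω i) = fun _ => v₀ i := by
        funext ω; show PhiFun d v₀ G' 0 _ i = v₀ i; simp only [PhiFun]
      rw [this]; exact memLp_const _
    | succ k ih =>
      intro hk1 i
      have hk : k < N := Nat.lt_of_succ_le hk1
      have hY : MemLp (fun ω => (G ⟨k, hk⟩).mulVec (V' k ω) i) 2 μ := by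
        have : (fun ω => (G ⟨k, hk⟩).mulVec (V' k ω) i)
            = fun ω => ∑ j, G ⟨k, hk⟩ i j * V' k ω j := rfl
        rw [this]
        exact memLp_finset_sum _ fun j _ => (ih (le_of_lt hk) j).const_mul _
      have hprod : MemLp (fun ω => c' ⟨k, hk⟩ ω i * (G ⟨k, hk⟩).mulVec (V' k ω) i) 2 μ :=
        Memℒp.indep_mul (hIndepS k hk i) (hL2' ⟨k, hk⟩ i) hY
      have : (fun ω => V' (k + 1) ω i)
          = fun ω => c' ⟨k, hk⟩ ω i * (G ⟨k, hk⟩).mulVec (V' k ω) i := by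
        funext ω; rw [hV'rec k hk ω]
      rw [this]; exact hprod
  -- mean recursion
  have hEV : ∀ k, k ≤ N → ∀ i, ∫ ω, V' k ω i ∂μ = MuSeq d v₀ G' k i := by
    intro k
    induction k with
    | zero =>
      intro _ i
      have : (fun ω => V' 0 ω i) = fun _ => v₀ i := by
        funext ω; show PhiFun d v₀ G' 0 _ i = v₀ i; simp only [PhiFun]
      rw [this, integral_const]
      simp [MuSeq]
    | succ k ih =>
      intro hk1 i
      have hk : k < N := Nat.lt_of_succ_le hk1
      have hre : (fun ω => V' (k + 1) ω i)
          = fun ω => c' ⟨k, hk⟩ ω i * (G ⟨k, hk⟩).mulVec (V' k ω) i := by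
        funext ω; rw [hV'rec k hk ω]
      have hY : MemLp (fun ω => (G ⟨k, hk⟩).mulVec (V' k ω) i) 2 μ := by
        have : (fun ω => (G ⟨k, hk⟩).mulVec (V' k ω) i)
            = fun ω => ∑ j, G ⟨k, hk⟩ i j * V' k ω j := rfl
        rw [this]
        exact memLp_finset_sum _ fun j _ => (hVL2 k (le_of_lt hk) j).const_mul _
      rw [hre, indep_integral_mul (hIndepS k hk i) (hL2' ⟨k, hk⟩ i) hY, hmean' ⟨k, hk⟩ i,
        one_mul]
      have hYsum : (fun ω => (G ⟨k, hk⟩).mulVec (V' k ω) i)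
          = fun ω => ∑ j, G ⟨k, hk⟩ i j * V' k ω j := rfl
      rw [hYsum, integral_finset_sum _ fun j _ =>
        (((hVL2 k (le_of_lt hk) j).integrable one_le_two).const_mul _)]
      have : ∀ j, ∫ ω, G ⟨k, hk⟩ i j * V' k ω j ∂μ = G ⟨k, hk⟩ i j * MuSeq d v₀ G' k j := by
        intro j
        rw [integral_const_mul, ih (le_of_lt hk) j]
      rw [Finset.sum_congr rfl fun j _ => this j]
      show _ = (G' k).mulVec (MuSeq d v₀ G' k) i
      have h3 : G' k = G ⟨k, hk⟩ := by simp only [hG'def, dif_pos hk]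
      rw [h3]
      rfl
  -- second moment recursion
  have hSM : ∀ k, k ≤ N → ∫ ω, (∑ i, (V' k ω i) ^ 2) ∂μ ≤ (1 + ξ) ^ k := by
    intro k
    induction k with
    | zero =>
      intro _
      have : (fun ω => ∑ i, (V' 0 ω i) ^ 2) = fun _ => ∑ i, v₀ i ^ 2 := by
        funext ω
        refine Finset.sum_congr rfl fun i _ => ?_
        show (PhiFun d v₀ G' 0 _ i) ^ 2 = _
        simp only [PhiFun]
      rw [this, integral_const]
      simp [hsum_v₀]
    | succ k ih =>
      intro hk1
      have hk : k < N := Nat.lt_of_succ_le hk1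
      set kF : Fin N := ⟨k, hk⟩ with hkF
      set Y : Fin d → Ω → ℝ := fun i ω => (G kF).mulVec (V' k ω) i with hYdef
      have hYL2 : ∀ i, MemLp (Y i) 2 μ := by
        intro i
        have : Y i = fun ω => ∑ j, G kF i j * V' k ω j := rfl
        rw [this]
        exact memLp_finset_sum _ fun j _ => (hVL2 k (le_of_lt hk) j).const_mul _
      have hre : ∀ i, (fun ω => V' (k + 1) ω i) = fun ω => c' kF ω i * Y i ω := by
        intro i; funext ω; rw [hV'rec k hk ω]
      have hprodL2 : ∀ i, MemLp (fun ω => c' kF ω i * Y i ω) 2 μ := fun i =>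
        Memℒp.indep_mul (hIndepS k hk i) (hL2' kF i) (hYL2 i)
      have hsqint : ∀ i, Integrable (fun ω => (c' kF ω i * Y i ω) ^ 2) μ := fun i =>
        (memLp_two_iff_integrable_sq (hprodL2 i).1).1 (hprodL2 i)
      have hXsqint : ∀ i, Integrable (fun ω => (c' kF ω i) ^ 2) μ := fun i =>
        (memLp_two_iff_integrable_sq (hL2' kF i).1).1 (hL2' kF i)
      have hYsqint : ∀ i, Integrable (fun ω => (Y i ω) ^ 2) μ := fun i =>
        (memLp_two_iff_integrable_sq (hYL2 i).1).1 (hYL2 i)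
      have hIndepSq : ∀ i, IndepFun (fun ω => (c' kF ω i) ^ 2) (fun ω => (Y i ω) ^ 2) μ :=
        fun i => (hIndepS k hk i).comp (measurable_id.pow_const 2) (measurable_id.pow_const 2)
      have hXsec : ∀ i, ∫ ω, (c' kF ω i) ^ 2 ∂μ ≤ 1 + ξ := by
        intro i
        have h := hsec' kF i i
        rw [abs_le] at h
        have : (fun ω => (c' kF ω i) ^ 2) = fun ω => c' kF ω i * c' kF ω i := by
          funext ω; ring
        rw [this]
        linarith [h.2]
      have hYnonneg : ∀ i, 0 ≤ ∫ ω, (Y i ω) ^ 2 ∂μ := fun i =>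
        integral_nonneg fun ω => sq_nonneg _
      calc ∫ ω, (∑ i, (V' (k+1) ω i) ^ 2) ∂μ
          = ∫ ω, (∑ i, (c' kF ω i * Y i ω) ^ 2) ∂μ := by
            refine integral_congr_ae (Filter.Eventually.of_forall fun ω => ?_)
            refine Finset.sum_congr rfl fun i _ => ?_
            rw [hV'rec k hk ω]
        _ = ∑ i, ∫ ω, (c' kF ω i * Y i ω) ^ 2 ∂μ :=
            integral_finset_sum _ fun i _ => hsqint i
        _ = ∑ i, (∫ ω, (c' kF ω i) ^ 2 ∂μ) * ∫ ω, (Y i ω) ^ 2 ∂μ := by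
            refine Finset.sum_congr rfl fun i _ => ?_
            have : (fun ω => (c' kF ω i * Y i ω) ^ 2)
                = fun ω => (c' kF ω i) ^ 2 * (Y i ω) ^ 2 := by
              funext ω; ring
            rw [this]
            exact (hIndepSq i).integral_fun_mul_eq_mul_integral (hXsqint i).1 (hYsqint i).1
        _ ≤ ∑ i, (1 + ξ) * ∫ ω, (Y i ω) ^ 2 ∂μ := by
            refine Finset.sum_le_sum fun i _ => ?_
            exact mul_le_mul_of_nonneg_right (hXsec i) (hYnonneg i)
        _ = (1 + ξ) * ∑ i, ∫ ω, (Y i ω) ^ 2 ∂μ := by rw [Finset.mul_sum]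
        _ = (1 + ξ) * ∫ ω, (∑ i, (Y i ω) ^ 2) ∂μ := by
            rw [integral_finset_sum _ fun i _ => hYsqint i]
        _ = (1 + ξ) * ∫ ω, (∑ j, (V' k ω j) ^ 2) ∂μ := by
            congr 1
            refine integral_congr_ae (Filter.Eventually.of_forall fun ω => ?_)
            exact orth_sum_sq (hG kF) (V' k ω)
        _ ≤ (1 + ξ) * (1 + ξ) ^ k :=
            mul_le_mul_of_nonneg_left (ih (le_of_lt hk)) (by linarith)
        _ = (1 + ξ) ^ (k + 1) := by ring
  -- MuSeq equals the matrix product formula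
  have hMu : ∀ k, k ≤ N →
      MuSeq d v₀ G' k = (((List.ofFn G).take k).reverse).prod.mulVec v₀ := by
    intro k
    induction k with
    | zero =>
      intro _
      simp [MuSeq, Matrix.one_mulVec]
    | succ k ih =>
      intro hk1
      have hk : k < N := Nat.lt_of_succ_le hk1
      have ht : (List.ofFn G).take (k + 1) = (List.ofFn G).take k ++ [G ⟨k, hk⟩] := by
        rw [List.take_succ]
        congr
        rw [List.getElem?_eq_getElem (by simpa using hk)]
        simp
      have h3 : G' k = G ⟨k, hk⟩ := by simp only [hG'def, dif_pos hk]
      show (G' k).mulVec (MuSeq d v₀ G' k) = _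
      rw [h3, ih (le_of_lt hk), ht, List.reverse_append, List.reverse_singleton,
        List.singleton_append, List.prod_cons, ← Matrix.mulVec_mulVec]
  have hMuN : μN = MuSeq d v₀ G' N := by
    have htake : (List.ofFn G).take N = List.ofFn G :=
      List.take_of_length_le (by simp)
    rw [hμN, hMu N le_rfl, htake]
  -- norm of μN
  have hPmem : (List.ofFn G).reverse.prod ∈ Matrix.orthogonalGroup (Fin d) ℝ := by
    apply Submonoid.list_prod_mem
    intro x hx
    rw [List.mem_reverse] at hx
    obtain ⟨kk, rfl⟩ := List.mem_ofFn.1 hx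
    exact hG kk
  have hnorm : ∑ i, (μN i) ^ 2 = 1 := by
    rw [hμN, orth_sum_sq hPmem v₀, hsum_v₀]
  -- final assembly
  intro w
  have hae2 : (fun ω => (w ⬝ᵥ V N ω - w ⬝ᵥ μN) ^ 2)
      =ᵐ[μ] fun ω => (w ⬝ᵥ V' N ω - w ⬝ᵥ μN) ^ 2 := by
    filter_upwards [hVae N le_rfl] with ω hω
    rw [hω]
  rw [integral_congr_ae hae2]
  have hXi := hVL2 N le_rfl
  have hXint : ∀ i, Integrable (fun ω => V' N ω i) μ := fun i =>
    (hXi i).integrable one_le_two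
  have hXsq : ∀ i, Integrable (fun ω => (V' N ω i) ^ 2) μ := fun i =>
    (memLp_two_iff_integrable_sq (hXi i).1).1 (hXi i)
  have hdiffL2 : ∀ i, MemLp (fun ω => V' N ω i - μN i) 2 μ := fun i =>
    (hXi i).sub (memLp_const _)
  have hdiff : ∀ i, Integrable (fun ω => (V' N ω i - μN i) ^ 2) μ := fun i =>
    (memLp_two_iff_integrable_sq (hdiffL2 i).1).1 (hdiffL2 i)
  have hgint : Integrable (fun ω => (∑ i, w i ^ 2) * ∑ i, (V' N ω i - μN i) ^ 2) μ :=
    (integrable_finset_sum _ fun i _ => hdiff i).const_mul _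
  have hbound : ∀ ω, (w ⬝ᵥ V' N ω - w ⬝ᵥ μN) ^ 2
      ≤ (∑ i, w i ^ 2) * ∑ i, (V' N ω i - μN i) ^ 2 := by
    intro ω
    have hd : w ⬝ᵥ V' N ω - w ⬝ᵥ μN = ∑ i, w i * (V' N ω i - μN i) := by
      simp [dotProduct, mul_sub, Finset.sum_sub_distrib]
    rw [hd]
    exact Finset.sum_mul_sq_le_sq_mul_sq Finset.univ w _
  refine le_trans (integral_mono_of_nonneg
    (Filter.Eventually.of_forall fun ω => sq_nonneg _) hgint
    (Filter.Eventually.of_forall hbound)) ?_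
  rw [integral_const_mul]
  have hper : ∀ i, ∫ ω, (V' N ω i - μN i) ^ 2 ∂μ
      = (∫ ω, (V' N ω i) ^ 2 ∂μ) - (μN i) ^ 2 := by
    intro i
    have hexp : (fun ω => (V' N ω i - μN i) ^ 2)
        = fun ω => ((V' N ω i) ^ 2 - 2 * μN i * V' N ω i) + (μN i) ^ 2 := by
      funext ω; ring
    have hB : Integrable (fun ω => 2 * μN i * V' N ω i) μ :=
      (hXint i).const_mul (2 * μN i)
    have hA : Integrable (fun ω => V' N ω i ^ 2 - 2 * μN i * V' N ω i) μ :=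
      (hXsq i).sub hB
    rw [hexp, integral_add hA (integrable_const _),
      integral_sub (hXsq i) hB, integral_const_mul, integral_const]
    have hEVi : ∫ ω, V' N ω i ∂μ = μN i := by rw [hEV N le_rfl i, ← hMuN]
    rw [hEVi]
    simp [measure_univ]
    ring
  have hsumint : ∫ ω, (∑ i, (V' N ω i - μN i) ^ 2) ∂μ
      = (∫ ω, (∑ i, (V' N ω i) ^ 2) ∂μ) - 1 := by
    rw [integral_finset_sum _ fun i _ => hdiff i,
      Finset.sum_congr rfl fun i _ => hper i, Finset.sum_sub_distrib,
      ← integral_finset_sum _ fun i _ => hXsq i, hnorm]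
  rw [hsumint]
  have hfinal1 : (∫ ω, (∑ i, (V' N ω i) ^ 2) ∂μ) - 1 ≤ Real.exp (N * ξ) - 1 := by
    have h1 := hSM N le_rfl
    have h2 : (1 + ξ) ^ N ≤ Real.exp (N * ξ) := by
      rw [Real.exp_nat_mul]
      exact pow_le_pow_left₀ (by linarith) (by linarith [Real.add_one_le_exp ξ]) N
    linarith
  have hw2 : enorm₂ w ^ 2 = ∑ i, w i ^ 2 :=
    Real.sq_sqrt (Finset.sum_nonneg fun i _ => sq_nonneg _)
  rw [hw2]
  exact mul_le_mul_of_nonneg_left hfinal1 (Finset.sum_nonneg fun i _ => sq_nonneg _)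
end

section
/- Let σ ≥ 0 be a real number, L a positive natural number, and p ∈ ℝ^L a probability vector (p_i ≥ 0 for all i and Σ_i p_i = 1) satisfying p₁ ≥ 1/√(1+σ) and Σ_{i=2}^{L} p_i ≤ √(1+σ) − 1. Then the entrywise ℓ₁ norm of the matrix diag(p) − p pᵀ satisfies Σ_{i,j} |(diag(p) − p pᵀ)_{ij}| ≤ (5/2)σ + (1/4)σ². -/
open scoped BigOperators
open Matrix

/-- for a probability vector `p` with `p₁ ≥ 1/√(1+σ)` and
`∑_{i≥2} p_i ≤ √(1+σ) - 1`, the entrywise ℓ₁ norm of `diag(p) - p pᵀ` is at most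
`(5/2)σ + (1/4)σ²`. -/
theorem stmt8 (σ : ℝ) (hσ : 0 ≤ σ) (L : ℕ) (hL : 0 < L)
    (p : Fin L → ℝ) (hp0 : ∀ i, 0 ≤ p i) (hp1 : ∑ i, p i = 1)
    (hpfirst : 1 / Real.sqrt (1 + σ) ≤ p ⟨0, hL⟩)
    (hprest : ∑ i ∈ Finset.univ.erase ⟨0, hL⟩, p i ≤ Real.sqrt (1 + σ) - 1) :
    ∑ i, ∑ j, |(Matrix.diagonal p - Matrix.vecMulVec p p) i j| ≤
      (5 / 2) * σ + (1 / 4) * σ ^ 2 := by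
  have hple : ∀ i, p i ≤ 1 := by
    intro i
    calc p i ≤ ∑ j, p j := Finset.single_le_sum (fun j _ => hp0 j) (Finset.mem_univ i)
    _ = 1 := hp1
  -- row sums
  have hrow : ∀ i, ∑ j, |(Matrix.diagonal p - Matrix.vecMulVec p p) i j|
      = 2 * (p i * (1 - p i)) := by
    intro i
    rw [← Finset.add_sum_erase _ _ (Finset.mem_univ i)]
    have h1 : |(Matrix.diagonal p - Matrix.vecMulVec p p) i i| = p i * (1 - p i) := by
      simp only [Matrix.sub_apply, Matrix.diagonal_apply_eq, Matrix.vecMulVec_apply]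
      rw [abs_of_nonneg (by nlinarith [hp0 i, hple i])]
      ring
    have h2 : ∑ j ∈ Finset.univ.erase i, |(Matrix.diagonal p - Matrix.vecMulVec p p) i j|
        = ∑ j ∈ Finset.univ.erase i, p i * p j := by
      refine Finset.sum_congr rfl fun j hj => ?_
      have hji : j ≠ i := Finset.ne_of_mem_erase hj
      simp only [Matrix.sub_apply, Matrix.vecMulVec_apply,
        Matrix.diagonal_apply_ne' p hji]
      rw [abs_of_nonpos (by nlinarith [hp0 i, hp0 j])]
      ring
    have h3 : ∑ j ∈ Finset.univ.erase i, p i * p j = p i * (1 - p i) := by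
      rw [← Finset.mul_sum]
      have : ∑ j ∈ Finset.univ.erase i, p j = 1 - p i := by
        have := Finset.add_sum_erase Finset.univ p (Finset.mem_univ i)
        rw [hp1] at this
        linarith
      rw [this]
    rw [h1, h2, h3]; ring
  have htot : ∑ i, ∑ j, |(Matrix.diagonal p - Matrix.vecMulVec p p) i j|
      = 2 * (1 - ∑ i, p i ^ 2) := by
    simp only [hrow]
    rw [← Finset.mul_sum]
    have : ∑ i, p i * (1 - p i) = (∑ i, p i) - ∑ i, p i ^ 2 := by
      rw [← Finset.sum_sub_distrib]
      exact Finset.sum_congr rfl fun i _ => by ring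
    rw [this, hp1]
  rw [htot]
  have hsq : ∑ i, p i ^ 2 ≥ p ⟨0, hL⟩ ^ 2 :=
    Finset.single_le_sum (fun j _ => sq_nonneg (p j)) (Finset.mem_univ (⟨0, hL⟩ : Fin L))
  set a := p ⟨0, hL⟩ with ha
  set s := Real.sqrt (1 + σ) with hs
  have hs2 : s ^ 2 = 1 + σ := Real.sq_sqrt (by linarith)
  have hs1 : 1 ≤ s := by
    rw [hs]
    nlinarith [Real.sqrt_nonneg (1 + σ), Real.sq_sqrt (show (0:ℝ) ≤ 1 + σ by linarith)]
  have has : a * s ≥ 1 := by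
    have : 1 / s ≤ a := hpfirst
    have hspos : 0 < s := by linarith
    calc (1:ℝ) = (1 / s) * s := by field_simp
    _ ≤ a * s := by nlinarith
  nlinarith [hsq, sq_nonneg (a*s - 1), sq_nonneg s, hp0 ⟨0, hL⟩, hs2, hs1, has, sq_nonneg (s-1)]
end

section
/- Let d be a positive natural number, G a d×d real orthogonal matrix, A a d×d real symmetric positive semidefinite matrix, and Ξ any d×d real matrix. Then Tr(G A Gᵀ + Ξ ∘ (G A Gᵀ)) ≤ Tr(A) · (1 + ‖Ξ‖_max), where ∘ denotes the Hadamard (entrywise) product. -/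
open scoped BigOperators
open Matrix

/-- The max norm of a real matrix: the largest absolute value of an entry. -/
noncomputable def maxNorm {d : ℕ} (A : Matrix (Fin d) (Fin d) ℝ) : ℝ :=
  ⨆ i, ⨆ j, |A i j|

lemma abs_le_maxNorm {d : ℕ} (A : Matrix (Fin d) (Fin d) ℝ) (i j : Fin d) :
    |A i j| ≤ maxNorm A := by
  have h1 : |A i j| ≤ ⨆ j, |A i j| :=
    le_ciSup (Set.Finite.bddAbove (Set.finite_range fun j => |A i j|)) j
  have h2 : (⨆ j, |A i j|) ≤ maxNorm A :=
    le_ciSup (Set.Finite.bddAbove (Set.finite_range fun i => ⨆ j, |A i j|)) i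
  exact h1.trans h2

/-- one-step trace recursion of Proposition 3: for orthogonal `G`,
symmetric positive semidefinite `A` and any `Ξ`,
`Tr(G A Gᵀ + Ξ ∘ (G A Gᵀ)) ≤ Tr(A)(1 + ‖Ξ‖_max)`. -/
theorem stmt12 (d : ℕ) (hd : 0 < d)
    (G : Matrix (Fin d) (Fin d) ℝ) (hG : G ∈ Matrix.orthogonalGroup (Fin d) ℝ)
    (A : Matrix (Fin d) (Fin d) ℝ) (hA : A.PosSemidef)
    (Ξ : Matrix (Fin d) (Fin d) ℝ) :
    (G * A * Gᵀ + Matrix.hadamard Ξ (G * A * Gᵀ)).trace ≤ A.trace * (1 + maxNorm Ξ) := by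
  set B := G * A * Gᵀ with hB
  have hBps : B.PosSemidef := by
    have hGt : Gᵀ = Gᴴ := rfl
    rw [hB, hGt]
    exact hA.mul_mul_conjTranspose_same G
  have hGG : Gᵀ * G = 1 := by
    have := hG.1
    simpa [Matrix.star_eq_conjTranspose] using this
  have htr : B.trace = A.trace := by
    rw [hB, Matrix.trace_mul_cycle, hGG, Matrix.one_mul]
  have hdiag : ∀ i, 0 ≤ B i i := fun i => hBps.diag_nonneg (i := i)
  have hhad : (Matrix.hadamard Ξ B).trace ≤ A.trace * maxNorm Ξ := by
    rw [← htr]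
    have hexp : (Matrix.hadamard Ξ B).trace = ∑ i, Ξ i i * B i i := by
      simp [Matrix.trace, Matrix.diag, Matrix.hadamard]
    have hexp2 : B.trace = ∑ i, B i i := by
      simp [Matrix.trace, Matrix.diag]
    rw [hexp, hexp2, Finset.sum_mul]
    apply Finset.sum_le_sum
    intro i _
    calc Ξ i i * B i i ≤ |Ξ i i| * B i i :=
          mul_le_mul_of_nonneg_right (le_abs_self _) (hdiag i)
      _ ≤ maxNorm Ξ * B i i :=
          mul_le_mul_of_nonneg_right (abs_le_maxNorm Ξ i i) (hdiag i)
      _ = B i i * maxNorm Ξ := mul_comm _ _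
  calc (B + Matrix.hadamard Ξ B).trace
      = B.trace + (Matrix.hadamard Ξ B).trace := Matrix.trace_add _ _
    _ ≤ A.trace + A.trace * maxNorm Ξ := by rw [htr]; linarith
    _ = A.trace * (1 + maxNorm Ξ) := by ring
end
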